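/- Let X_1, …, X_ℓ be independent random variables where X_i takes value 1/p_i with probability p_i and 0 otherwise, and suppose min_i p_i ≥ p. Then for any ε ∈ (0,1), with probability at least 1 − 2·exp(−0.38·ε²·ℓ·p), the sum X_1 + ⋯ + X_ℓ lies in [(1−ε)ℓ, (1+ε)ℓ]. -/

import Mathlib

open MeasureTheory ProbabilityTheory

open Real

lemma log_quartic {t : ℝ} (ht : 0 ≤ t) :
    t - t^2/2 + t^3/3 - t^4/4 ≤ Real.log (1+t) := by
  set g : ℝ → ℝ := fun x => Real.log (1+x) - (x - x^2/2 + x^3/3 - x^4/4) with hg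
  have hd : ∀ x : ℝ, 0 ≤ x → HasDerivAt g (1/(1+x) - (1 - x + x^2 - x^3)) x := by
    intro x hx
    have h1 : (0:ℝ) < 1 + x := by linarith
    have hlog : HasDerivAt (fun x : ℝ => Real.log (1+x)) (1/(1+x)) x := by
      have := ((hasDerivAt_id x).const_add 1).log h1.ne'
      simpa using this
    have hpoly : HasDerivAt (fun x : ℝ => x - x^2/2 + x^3/3 - x^4/4)
        (1 - x + x^2 - x^3) x := by
      have := (((hasDerivAt_id x).sub ((hasDerivAt_pow 2 x).div_const 2)).add
        ((hasDerivAt_pow 3 x).div_const 3)).sub ((hasDerivAt_pow 4 x).div_const 4)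
      refine this.congr_deriv ?_
      simp
    exact hlog.sub hpoly
  have hmono : MonotoneOn g (Set.Ici 0) := by
    apply monotoneOn_of_deriv_nonneg (convex_Ici 0)
    · exact fun x hx => (hd x hx).continuousAt.continuousWithinAt
    · intro x hx
      rw [interior_Ici] at hx
      exact (hd x (le_of_lt hx)).differentiableAt.differentiableWithinAt
    · intro x hx
      rw [interior_Ici] at hx
      rw [(hd x hx.le).deriv]
      have h1 : (0:ℝ) < 1 + x := by linarith [(show (0:ℝ) < x from hx).le]
      rw [sub_nonneg, le_div_iff₀ h1]
      nlinarith [pow_nonneg (show (0:ℝ) < x from hx).le 4]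
  have h0 : g 0 = 0 := by simp [hg]
  have := hmono (Set.self_mem_Ici) (Set.mem_Ici.2 ht) ht
  rw [h0] at this
  simp only [hg] at this
  linarith

lemma key_upper {x : ℝ} (hx : x ∈ Set.Ioo (0:ℝ) 1) :
    0.38 * x^2 ≤ (1+x) * Real.log (1+x) - x := by
  obtain ⟨hx0, hx1⟩ := hx
  set f : ℝ → ℝ := fun y => (1+y) * Real.log (1+y) - y - 0.38 * y^2 with hf
  have hd : ∀ y : ℝ, -1 < y → HasDerivAt f (Real.log (1+y) - 0.76 * y) y := by
    intro y hy
    have h1 : (0:ℝ) < 1 + y := by linarith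
    have hlog : HasDerivAt (fun y : ℝ => Real.log (1+y)) (1/(1+y)) y := by
      have := ((hasDerivAt_id y).const_add 1).log h1.ne'
      simpa using this
    have h2 : HasDerivAt (fun y : ℝ => (1+y) * Real.log (1+y))
        (1 * Real.log (1+y) + (1+y) * (1/(1+y))) y :=
      (((hasDerivAt_id y).const_add 1)).mul hlog
    have h3 := (h2.sub (hasDerivAt_id y)).sub ((hasDerivAt_pow 2 y).const_mul 0.38)
    refine h3.congr_deriv ?_
    field_simp
    ring
  -- claim: f y ≥ 0 for y ∈ [0,1]
  have hd2 : ∀ y : ℝ, -1 < y →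
      HasDerivAt (fun y : ℝ => Real.log (1+y) - 0.76 * y) (1/(1+y) - 0.76) y := by
    intro y hy
    have h1 : (0:ℝ) < 1 + y := by linarith
    have hlog : HasDerivAt (fun y : ℝ => Real.log (1+y)) (1/(1+y)) y := by
      have := ((hasDerivAt_id y).const_add 1).log h1.ne'
      simpa using this
    have := hlog.sub ((hasDerivAt_id y).const_mul 0.76)
    exact this.congr_deriv (by simp)
  have hderiv_eq : Set.EqOn (deriv f) (fun y : ℝ => Real.log (1+y) - 0.76 * y)
      (Set.Ioi (-1 : ℝ)) := fun y hy => (hd y hy).deriv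
  have hmono : MonotoneOn f (Set.Icc (0:ℝ) (1/3)) := by
    apply monotoneOn_of_deriv_nonneg (convex_Icc _ _)
    · exact fun y hy => (hd y (by linarith [hy.1])).continuousAt.continuousWithinAt
    · intro y hy
      rw [interior_Icc] at hy
      exact (hd y (by linarith [hy.1])).differentiableAt.differentiableWithinAt
    · intro y hy
      rw [interior_Icc] at hy
      rw [(hd y (by linarith [hy.1])).deriv]
      have hq := log_quartic hy.1.le
      nlinarith [hy.1.le, hy.2.le, sq_nonneg y, pow_nonneg hy.1.le 3]
  have hconc : ConcaveOn ℝ (Set.Icc (1/3:ℝ) 1) f := by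
    apply concaveOn_of_deriv2_nonpos (convex_Icc _ _)
    · exact fun y hy => (hd y (by linarith [hy.1])).continuousAt.continuousWithinAt
    · intro y hy
      rw [interior_Icc] at hy
      exact (hd y (by linarith [hy.1])).differentiableAt.differentiableWithinAt
    · intro y hy
      rw [interior_Icc] at hy
      have hmem : Set.Ioi (-1:ℝ) ∈ nhds y := Ioi_mem_nhds (by linarith [hy.1])
      have hev : deriv f =ᶠ[nhds y] (fun y : ℝ => Real.log (1+y) - 0.76 * y) :=
        Filter.eventuallyEq_of_mem hmem hderiv_eq
      exact ((hd2 y (by linarith [hy.1])).differentiableAt.congr_of_eventuallyEq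
        hev).differentiableWithinAt
    · intro y hy
      rw [interior_Icc] at hy
      have hmem : Set.Ioi (-1:ℝ) ∈ nhds y := Ioi_mem_nhds (by linarith [hy.1])
      have hev : deriv f =ᶠ[nhds y] (fun y : ℝ => Real.log (1+y) - 0.76 * y) :=
        Filter.eventuallyEq_of_mem hmem hderiv_eq
      have : deriv (deriv f) y = 1/(1+y) - 0.76 := by
        rw [hev.deriv_eq]
        exact (hd2 y (by linarith [hy.1])).deriv
      simp only [Function.iterate_succ, Function.iterate_zero, Function.comp_apply, id_eq]
      rw [this]
      have h1 : (4/3:ℝ) ≤ 1 + y := by linarith [hy.1]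
      have : 1/(1+y) ≤ (3/4:ℝ) := by
        rw [div_le_iff₀ (by linarith)]
        linarith
      linarith
  have hf13 : 0 ≤ f (1/3) := by
    have hq := log_quartic (by norm_num : (0:ℝ) ≤ 1/3)
    simp only [hf]
    norm_num at hq ⊢
    nlinarith [hq]
  have hf1 : 0 ≤ f 1 := by
    have h2 := Real.log_two_gt_d9
    simp only [hf]
    norm_num
    nlinarith [h2]
  have main : ∀ y ∈ Set.Icc (0:ℝ) 1, 0 ≤ f y := by
    intro y hy
    rcases le_or_gt y (1/3) with h | h
    · have h0 : f 0 = 0 := by simp [hf]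
      have := hmono (Set.mem_Icc.2 ⟨le_refl 0, by norm_num⟩)
        (Set.mem_Icc.2 ⟨hy.1, h⟩) hy.1
      rw [h0] at this
      exact this
    · have hseg : y ∈ segment ℝ (1/3:ℝ) 1 := by
        rw [segment_eq_Icc (by norm_num : (1/3:ℝ) ≤ 1)]
        exact ⟨h.le, hy.2⟩
      have := hconc.ge_on_segment (Set.mem_Icc.2 ⟨le_refl _, by norm_num⟩)
        (Set.mem_Icc.2 ⟨by norm_num, le_refl 1⟩) hseg
      exact le_trans (le_min hf13 hf1) this
  have := main x ⟨hx0.le, hx1.le⟩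
  simp only [hf] at this
  linarith

lemma key_lower {x : ℝ} (hx : x ∈ Set.Ioo (0:ℝ) 1) :
    0.38 * x^2 ≤ (1-x) * Real.log (1-x) + x := by
  obtain ⟨hx0, hx1⟩ := hx
  set f : ℝ → ℝ := fun y => (1-y) * Real.log (1-y) + y - y^2/2 with hf
  have hd : ∀ y : ℝ, y < 1 → HasDerivAt f (-Real.log (1-y) - y) y := by
    intro y hy
    have h1 : (0:ℝ) < 1 - y := by linarith
    have hlog : HasDerivAt (fun y : ℝ => Real.log (1-y)) (-(1/(1-y))) y := by
      have hin : HasDerivAt (fun y : ℝ => 1 - y) (-1) y := by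
        simpa using ((hasDerivAt_id y).const_sub 1)
      have := hin.log h1.ne'
      convert this using 1
      field_simp
    have h2 : HasDerivAt (fun y : ℝ => (1-y) * Real.log (1-y))
        ((-1) * Real.log (1-y) + (1-y) * (-(1/(1-y)))) y :=
      HasDerivAt.mul (by simpa using ((hasDerivAt_id y).const_sub 1)) hlog
    have h3 := (h2.add (hasDerivAt_id y)).sub ((hasDerivAt_pow 2 y).div_const 2)
    refine h3.congr_deriv ?_
    field_simp
    ring
  have hmono : MonotoneOn f (Set.Icc (0:ℝ) x) := by
    apply monotoneOn_of_deriv_nonneg (convex_Icc _ _)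
    · exact fun y hy => (hd y (by linarith [hy.2])).continuousAt.continuousWithinAt
    · intro y hy
      rw [interior_Icc] at hy
      exact (hd y (by linarith [hy.2])).differentiableAt.differentiableWithinAt
    · intro y hy
      rw [interior_Icc] at hy
      rw [(hd y (by linarith [hy.2])).deriv]
      have h1 : (0:ℝ) < 1 - y := by linarith [hy.2]
      have := Real.log_le_sub_one_of_pos h1
      linarith
  have h0 : f 0 = 0 := by simp [hf]
  have := hmono (Set.mem_Icc.2 ⟨le_refl 0, hx0.le⟩)
    (Set.mem_Icc.2 ⟨hx0.le, le_refl x⟩) hx0.le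
  rw [h0] at this
  simp only [hf] at this
  nlinarith [this]

lemma mono_in_p {q p t : ℝ} (hq : 0 < q) (hpq : q ≤ p) :
    p * (Real.exp (t/p) - 1) ≤ q * (Real.exp (t/q) - 1) := by
  have hp : 0 < p := lt_of_lt_of_le hq hpq
  set r : ℝ := q / p with hr
  have hr0 : 0 < r := div_pos hq hp
  have hr1 : r ≤ 1 := (div_le_one hp).2 hpq
  have hconv := convexOn_exp.2 (Set.mem_univ (t/q)) (Set.mem_univ (0:ℝ))
    hr0.le (by linarith : (0:ℝ) ≤ 1 - r) (by ring)
  have hrw : r • (t/q) + (1-r) • (0:ℝ) = t / p := by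
    simp only [smul_eq_mul, hr]
    field_simp
    ring
  rw [hrw] at hconv
  simp only [smul_eq_mul, Real.exp_zero, mul_zero] at hconv
  -- hconv : exp (t/p) ≤ r * exp (t/q) + (1-r) * 1
  have : p * (Real.exp (t/p) - 1) ≤ p * (r * (Real.exp (t/q) - 1)) := by
    have := mul_le_mul_of_nonneg_left hconv hp.le
    nlinarith
  calc p * (Real.exp (t/p) - 1) ≤ p * (r * (Real.exp (t/q) - 1)) := this
    _ = q * (Real.exp (t/q) - 1) := by
        rw [hr]
        field_simp

open MeasureTheory ProbabilityTheory in
lemma mgf_scaled_bernoulli {Ω : Type*} [MeasurableSpace Ω] (μ : Measure Ω)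
    [IsProbabilityMeasure μ] (X : Ω → ℝ) (q : ℝ) (hq : 0 < q)
    (hmeas : Measurable X)
    (hone : μ {ω | X ω = 1 / q} = ENNReal.ofReal q)
    (hzero : μ {ω | X ω = 0} = ENNReal.ofReal (1 - q)) (t : ℝ) :
    Integrable (fun ω => Real.exp (t * X ω)) μ ∧
      mgf X μ t = q * Real.exp (t / q) + (1 - q) := by
  have hq1 : q ≤ 1 := by
    have h := hone ▸ prob_le_one (μ := μ) (s := {ω | X ω = 1 / q})
    exact (ENNReal.ofReal_le_one).1 h
  set A : Set Ω := {ω | X ω = 1 / q} with hA_def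
  set B : Set Ω := {ω | X ω = 0} with hB_def
  have hA : MeasurableSet A := hmeas (measurableSet_singleton (1/q))
  have hB : MeasurableSet B := hmeas (measurableSet_singleton (0:ℝ))
  have hne : (1:ℝ)/q ≠ 0 := one_div_ne_zero hq.ne'
  have hdis : Disjoint A B := by
    rw [Set.disjoint_left]
    intro ω hωA hωB
    have h1 : X ω = 1/q := hωA
    have h2 : X ω = 0 := hωB
    exact hne (h1.symm.trans h2)
  have hAB : μ (A ∪ B) = 1 := by
    rw [measure_union hdis hB, hone, hzero, ← ENNReal.ofReal_add hq.le (by linarith)]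
    norm_num
  have hae : ∀ᵐ ω ∂μ, ω ∈ A ∪ B := by
    rw [MeasureTheory.ae_iff]
    have : {ω | ¬ ω ∈ A ∪ B} = (A ∪ B)ᶜ := rfl
    rw [this, measure_compl (hA.union hB) (measure_ne_top _ _), hAB, measure_univ,
      tsub_self]
  set g : Ω → ℝ := fun ω => A.indicator (fun _ => Real.exp (t/q)) ω
      + B.indicator (fun _ => (1:ℝ)) ω with hg_def
  have haeeq : (fun ω => Real.exp (t * X ω)) =ᵐ[μ] g := by
    filter_upwards [hae] with ω hω
    rcases hω with hωA | hωB
    · have hωB : ω ∉ B := Set.disjoint_left.1 hdis hωA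
      simp only [hg_def, Set.indicator_of_mem hωA, Set.indicator_of_notMem hωB, add_zero]
      have : X ω = 1/q := hωA
      rw [this]
      rw [mul_one_div]
    · have hωA : ω ∉ A := Set.disjoint_right.1 hdis hωB
      simp only [hg_def, Set.indicator_of_notMem hωA, Set.indicator_of_mem hωB, zero_add]
      have : X ω = 0 := hωB
      rw [this, mul_zero, Real.exp_zero]
  have hgint : Integrable g μ :=
    ((integrable_const _).indicator hA).add ((integrable_const _).indicator hB)
  have hint : Integrable (fun ω => Real.exp (t * X ω)) μ := hgint.congr haeeq.symm
  refine ⟨hint, ?_⟩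
  rw [mgf, integral_congr_ae haeeq, hg_def]
  rw [integral_add ((integrable_const _).indicator hA) ((integrable_const _).indicator hB)]
  rw [integral_indicator_const _ hA, integral_indicator_const _ hB, measureReal_def, measureReal_def, hone, hzero,
    ENNReal.toReal_ofReal hq.le, ENNReal.toReal_ofReal (by linarith)]
  simp only [smul_eq_mul, mul_one]

open MeasureTheory ProbabilityTheory

/-- concentration bound for independent scaled Bernoulli variables. -/
theorem concentration_bound {Ω : Type*} [MeasurableSpace Ω]
    (μ : Measure Ω) [IsProbabilityMeasure μ]
    (ℓ : ℕ) (X : Fin ℓ → Ω → ℝ) (p : Fin ℓ → ℝ) (p₀ : ℝ) (ε : ℝ)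
    (hε : ε ∈ Set.Ioo (0 : ℝ) 1) (hp₀ : 0 < p₀) (hp : ∀ i, p₀ ≤ p i)
    (hmeas : ∀ i, Measurable (X i))
    (hindep : iIndepFun X μ)
    (hone : ∀ i, μ {ω | X i ω = 1 / p i} = ENNReal.ofReal (p i))
    (hzero : ∀ i, μ {ω | X i ω = 0} = ENNReal.ofReal (1 - p i)) :
    ENNReal.ofReal (1 - 2 * Real.exp (-0.38 * ε ^ 2 * ℓ * p₀)) ≤
      μ {ω | (∑ i, X i ω) ∈ Set.Icc ((1 - ε) * ℓ) ((1 + ε) * ℓ)} := by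
  obtain ⟨hε0, hε1⟩ := hε
  have hpi : ∀ i, 0 < p i := fun i => lt_of_lt_of_le hp₀ (hp i)
  have hint : ∀ (t : ℝ) (i : Fin ℓ), Integrable (fun ω => Real.exp (t * X i ω)) μ :=
    fun t i => (mgf_scaled_bernoulli μ (X i) (p i) (hpi i) (hmeas i) (hone i) (hzero i) t).1
  have hmgf : ∀ (t : ℝ) (i : Fin ℓ),
      mgf (X i) μ t = p i * Real.exp (t / p i) + (1 - p i) :=
    fun t i => (mgf_scaled_bernoulli μ (X i) (p i) (hpi i) (hmeas i) (hone i) (hzero i) t).2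
  have hmgf_le : ∀ (t : ℝ) (i : Fin ℓ),
      mgf (X i) μ t ≤ Real.exp (p₀ * (Real.exp (t / p₀) - 1)) := by
    intro t i
    rw [hmgf t i]
    have h1 : p i * Real.exp (t / p i) + (1 - p i)
        = 1 + p i * (Real.exp (t / p i) - 1) := by ring
    rw [h1]
    have h2 := mono_in_p hp₀ (hp i) (t := t)
    have h3 := Real.add_one_le_exp (p₀ * (Real.exp (t / p₀) - 1))
    linarith
  set S : Ω → ℝ := ∑ i, X i with hS_def
  have hSmeas : Measurable S := by
    have h : (∑ i, X i) = fun ω => ∑ i, X i ω := by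
      funext ω; simp [Finset.sum_apply]
    rw [hS_def, h]
    exact Finset.measurable_sum Finset.univ (fun i _ => hmeas i)
  have hmgf_sum : ∀ t : ℝ, mgf S μ t ≤ Real.exp ((ℓ:ℝ) * (p₀ * (Real.exp (t / p₀) - 1))) := by
    intro t
    rw [hS_def, hindep.mgf_sum hmeas Finset.univ]
    calc ∏ i, mgf (X i) μ t
        ≤ ∏ _i : Fin ℓ, Real.exp (p₀ * (Real.exp (t / p₀) - 1)) :=
          Finset.prod_le_prod (fun i _ => mgf_nonneg) (fun i _ => hmgf_le t i)
      _ = Real.exp ((ℓ:ℝ) * (p₀ * (Real.exp (t / p₀) - 1))) := by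
          rw [Finset.prod_const, Finset.card_univ, Fintype.card_fin, ← Real.exp_nat_mul]
  have hSint : ∀ t : ℝ, Integrable (fun ω => Real.exp (t * S ω)) μ := fun t =>
    hindep.integrable_exp_mul_sum hmeas (fun i _ => hint t i)
  have hl0 : (0:ℝ) ≤ (ℓ:ℝ) := Nat.cast_nonneg ℓ
  have h1pε : (0:ℝ) < 1 + ε := by linarith
  have h1mε : (0:ℝ) < 1 - ε := by linarith
  -- upper tail
  have hupper : (μ {ω | (1+ε) * (ℓ:ℝ) ≤ S ω}).toReal
      ≤ Real.exp (-0.38 * ε ^ 2 * ℓ * p₀) := by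
    set t₁ : ℝ := p₀ * Real.log (1+ε) with ht₁_def
    have ht₁ : 0 ≤ t₁ := mul_nonneg hp₀.le (Real.log_nonneg (by linarith))
    have ht₁p : t₁ / p₀ = Real.log (1+ε) := by
      rw [ht₁_def]; field_simp
    calc (μ {ω | (1+ε) * (ℓ:ℝ) ≤ S ω}).toReal
        ≤ Real.exp (-t₁ * ((1+ε) * (ℓ:ℝ))) * mgf S μ t₁ :=
          measure_ge_le_exp_mul_mgf _ ht₁ (hSint t₁)
      _ ≤ Real.exp (-t₁ * ((1+ε) * (ℓ:ℝ)))
            * Real.exp ((ℓ:ℝ) * (p₀ * (Real.exp (t₁ / p₀) - 1))) := by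
          exact mul_le_mul_of_nonneg_left (hmgf_sum t₁) (Real.exp_pos _).le
      _ = Real.exp (-t₁ * ((1+ε) * (ℓ:ℝ)) + (ℓ:ℝ) * (p₀ * (Real.exp (t₁ / p₀) - 1))) :=
          (Real.exp_add _ _).symm
      _ ≤ Real.exp (-0.38 * ε ^ 2 * ℓ * p₀) := by
          apply Real.exp_le_exp.2
          rw [ht₁p, Real.exp_log h1pε, ht₁_def]
          have hk := key_upper ⟨hε0, hε1⟩
          nlinarith [mul_le_mul_of_nonneg_left hk (mul_nonneg hl0 hp₀.le)]
  -- lower tail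
  have hlower : (μ {ω | S ω ≤ (1-ε) * (ℓ:ℝ)}).toReal
      ≤ Real.exp (-0.38 * ε ^ 2 * ℓ * p₀) := by
    set t₂ : ℝ := p₀ * Real.log (1-ε) with ht₂_def
    have ht₂ : t₂ ≤ 0 := mul_nonpos_of_nonneg_of_nonpos hp₀.le
      (Real.log_nonpos (by linarith) (by linarith))
    have ht₂p : t₂ / p₀ = Real.log (1-ε) := by
      rw [ht₂_def]; field_simp
    calc (μ {ω | S ω ≤ (1-ε) * (ℓ:ℝ)}).toReal
        ≤ Real.exp (-t₂ * ((1-ε) * (ℓ:ℝ))) * mgf S μ t₂ :=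
          measure_le_le_exp_mul_mgf _ ht₂ (hSint t₂)
      _ ≤ Real.exp (-t₂ * ((1-ε) * (ℓ:ℝ)))
            * Real.exp ((ℓ:ℝ) * (p₀ * (Real.exp (t₂ / p₀) - 1))) := by
          exact mul_le_mul_of_nonneg_left (hmgf_sum t₂) (Real.exp_pos _).le
      _ = Real.exp (-t₂ * ((1-ε) * (ℓ:ℝ)) + (ℓ:ℝ) * (p₀ * (Real.exp (t₂ / p₀) - 1))) :=
          (Real.exp_add _ _).symm
      _ ≤ Real.exp (-0.38 * ε ^ 2 * ℓ * p₀) := by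
          apply Real.exp_le_exp.2
          rw [ht₂p, Real.exp_log h1mε, ht₂_def]
          have hk := key_lower ⟨hε0, hε1⟩
          nlinarith [mul_le_mul_of_nonneg_left hk (mul_nonneg hl0 hp₀.le)]
  -- combine
  set E : Set Ω := {ω | S ω ∈ Set.Icc ((1-ε) * (ℓ:ℝ)) ((1+ε) * (ℓ:ℝ))} with hE_def
  have hEmeas : MeasurableSet E := hSmeas measurableSet_Icc
  have hsub : Eᶜ ⊆ {ω | S ω ≤ (1-ε) * (ℓ:ℝ)} ∪ {ω | (1+ε) * (ℓ:ℝ) ≤ S ω} := by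
    intro ω hω
    simp only [hE_def, Set.mem_compl_iff, Set.mem_setOf_eq, Set.mem_Icc, not_and_or,
      not_le] at hω
    rcases hω with h | h
    · exact Or.inl (le_of_lt h)
    · exact Or.inr (le_of_lt h)
  have hcompl : (μ Eᶜ).toReal ≤ 2 * Real.exp (-0.38 * ε ^ 2 * ℓ * p₀) := by
    have h1 : μ Eᶜ ≤ μ {ω | S ω ≤ (1-ε) * (ℓ:ℝ)} + μ {ω | (1+ε) * (ℓ:ℝ) ≤ S ω} :=
      le_trans (measure_mono hsub) (measure_union_le _ _)
    have h2 : (μ Eᶜ).toReal ≤ (μ {ω | S ω ≤ (1-ε) * (ℓ:ℝ)}).toReal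
        + (μ {ω | (1+ε) * (ℓ:ℝ) ≤ S ω}).toReal := by
      rw [← ENNReal.toReal_add (measure_ne_top _ _) (measure_ne_top _ _)]
      exact ENNReal.toReal_mono (by finiteness) h1
    linarith
  have hEreal : 1 - 2 * Real.exp (-0.38 * ε ^ 2 * ℓ * p₀) ≤ (μ E).toReal := by
    have h4 : (μ E).toReal + (μ Eᶜ).toReal = 1 := by
      rw [← ENNReal.toReal_add (measure_ne_top _ _) (measure_ne_top _ _),
        measure_add_measure_compl hEmeas, measure_univ, ENNReal.toReal_one]
    linarith
  have hsetEq : {ω | (∑ i, X i ω) ∈ Set.Icc ((1 - ε) * (ℓ:ℝ)) ((1 + ε) * (ℓ:ℝ))} = E := by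
    ext ω
    simp only [hE_def, hS_def, Set.mem_setOf_eq, Finset.sum_apply]
  rw [hsetEq]
  exact ENNReal.ofReal_le_of_le_toReal hEreal
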